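/- For each integer r ≥ 1, the assignment T_i(e_j) = e_j − q_i^r · ([r·a_{ji}]_{q_j}/[r]_{q_j}) · e_i (for i, j in I, with T_i(e_j) = e_j when i ≠ j interpreted via the Cartan matrix entry a_{ji}) defines a representation of the braid group B of g on the vector space C(q)^n with standard basis e_1, …, e_n; i.e., the operators T_i satisfy the braid relations T_iT_j = T_jT_i if a_{ij}a_{ji} = 0, T_iT_jT_i = T_jT_iT_j if a_{ij}a_{ji} = 1, (T_iT_j)^2 = (T_jT_i)^2 if a_{ij}a_{ji} = 2, and (T_iT_j)^3 = (T_jT_i)^3 if a_{ij}a_{ji} = 3. -/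

import Mathlib

/- STATEMENT 0: The operators `T_i e_j = e_j − q_i^r [r a_{ji}]_j/[r]_j e_i` define a
representation of the braid group of `g` on `C(q)^n`, i.e. they satisfy the braid relations
according to the value of `a_{ij} a_{ji}`. -/

noncomputable section

/-- The field `ℂ(q)`. -/
abbrev Kq : Type := RatFunc ℂ

/-- The indeterminate `q`. -/
noncomputable def qvar : Kq := RatFunc.X

/-- The quantum integer `[m]_q = (q^m − q^{−m})/(q − q^{−1})`. -/
noncomputable def qint (q : Kq) (m : ℤ) : Kq := (q ^ m - q ^ (-m)) / (q - q⁻¹)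

/-- The operator `T_i` on `C(q)^n` determined by `T_i e_j = e_j − q_i^r [r a_{ji}]_j/[r]_j e_i`. -/
noncomputable def T0 {n : ℕ} (A : Matrix (Fin n) (Fin n) ℤ) (d : Fin n → ℕ) (r : ℕ)
    (i : Fin n) (v : Fin n → Kq) : Fin n → Kq :=
  fun k =>
    if k = i then
      v i - ∑ j, (qvar ^ d i) ^ r * qint (qvar ^ d j) (r * A j i) / qint (qvar ^ d j) r * v j
    else v k


lemma qvar_ne_zero : (qvar : Kq) ≠ 0 := RatFunc.X_ne_zero

lemma X_pow_ne_one (k : ℕ) (hk : k ≠ 0) : (qvar : Kq) ^ k ≠ 1 := by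
  intro h
  have h1 : (algebraMap (Polynomial ℂ) Kq) (Polynomial.X ^ k) = algebraMap (Polynomial ℂ) Kq 1 := by
    rw [map_pow, RatFunc.algebraMap_X, map_one]
    exact h
  have h2 : (Polynomial.X : Polynomial ℂ) ^ k = 1 := RatFunc.algebraMap_injective ℂ h1
  have h3 := congrArg Polynomial.natDegree h2
  rw [Polynomial.natDegree_X_pow, Polynomial.natDegree_one] at h3
  exact hk h3

lemma sub_inv_ne (k : ℕ) (hk : k ≠ 0) : (qvar : Kq) ^ k - ((qvar : Kq) ^ k)⁻¹ ≠ 0 := by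
  intro h
  have h1 : (qvar : Kq) ^ k = ((qvar : Kq) ^ k)⁻¹ := sub_eq_zero.mp h
  apply X_pow_ne_one (k + k) (by omega)
  calc (qvar : Kq) ^ (k + k) = qvar ^ k * qvar ^ k := by rw [pow_add]
    _ = qvar ^ k * (qvar ^ k)⁻¹ := by nth_rewrite 2 [h1]; rfl
    _ = 1 := mul_inv_cancel₀ (pow_ne_zero _ qvar_ne_zero)

lemma qint_natCast (q : Kq) (k : ℕ) : qint q (k : ℤ) = (q ^ k - (q ^ k)⁻¹) / (q - q⁻¹) := by
  simp [qint, zpow_natCast, zpow_neg]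

lemma qint_neg (q : Kq) (m : ℤ) : qint q (-m) = -qint q m := by
  unfold qint
  rw [neg_neg, ← neg_div, neg_sub]

lemma qint_ne (D r : ℕ) (hD : D ≠ 0) (hr : r ≠ 0) :
    qint ((qvar : Kq) ^ D) (r : ℤ) ≠ 0 := by
  rw [qint_natCast]
  refine div_ne_zero ?_ (sub_inv_ne D hD)
  rw [← pow_mul]
  exact sub_inv_ne _ (by positivity)

lemma qint_two_mul (q : Kq) (hq : q ≠ 0) (r : ℕ) :
    qint q ((2 * r : ℕ) : ℤ) = qint q (r : ℤ) * (q ^ r + (q ^ r)⁻¹) := by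
  rw [qint_natCast, qint_natCast, div_mul_eq_mul_div]
  congr 1
  have ht : q ^ r ≠ 0 := pow_ne_zero _ hq
  rw [pow_mul']
  field_simp
  ring

lemma qint_three_mul (q : Kq) (hq : q ≠ 0) (r : ℕ) :
    qint q ((3 * r : ℕ) : ℤ) = qint q (r : ℤ) * ((q ^ r) ^ 2 + 1 + ((q ^ r) ^ 2)⁻¹) := by
  rw [qint_natCast, qint_natCast, div_mul_eq_mul_div]
  congr 1
  have ht : q ^ r ≠ 0 := pow_ne_zero _ hq
  rw [pow_mul']
  field_simp
  ring

/-- coefficient `c_{lk}` so that `(T_l v) l = v l - ∑ k, cc l k * v k`. -/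
noncomputable def cc {n : ℕ} (A : Matrix (Fin n) (Fin n) ℤ) (d : Fin n → ℕ) (r : ℕ)
    (l k : Fin n) : Kq :=
  (qvar ^ d l) ^ r * qint (qvar ^ d k) (r * A k l) / qint (qvar ^ d k) r

variable {n : ℕ} (A : Matrix (Fin n) (Fin n) ℤ) (d : Fin n → ℕ) (r : ℕ)

lemma cc_zero (i j : Fin n) (hA : A j i = 0) : cc A d r i j = 0 := by
  unfold cc
  rw [hA, mul_zero]
  simp [qint]

lemma cc_diag (i : Fin n) (hA : A i i = 2) (hdi : d i ≠ 0) (hr : r ≠ 0) :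
    cc A d r i i = ((qvar ^ d i) ^ r) ^ 2 + 1 := by
  unfold cc
  rw [hA]
  have h2 : ((r : ℤ) * 2) = ((2 * r : ℕ) : ℤ) := by push_cast; ring
  rw [h2, qint_two_mul _ (pow_ne_zero _ qvar_ne_zero) r, mul_div_assoc,
    mul_div_cancel_left₀ _ (qint_ne (d i) r hdi hr)]
  have ht : ((qvar : Kq) ^ d i) ^ r ≠ 0 := pow_ne_zero _ (pow_ne_zero _ qvar_ne_zero)
  field_simp

lemma cc_m1 (i j : Fin n) (hA : A j i = -1) (hdj : d j ≠ 0) (hr : r ≠ 0) :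
    cc A d r i j = -((qvar ^ d i) ^ r) := by
  unfold cc
  rw [hA]
  have h2 : ((r : ℤ) * (-1)) = -(r : ℤ) := by ring
  rw [h2, qint_neg, mul_neg, neg_div, mul_div_assoc,
    div_self (qint_ne (d j) r hdj hr), mul_one]

lemma cc_m2 (i j : Fin n) (hA : A j i = -2) (hd2 : d i = 2 * d j) (hdj : d j ≠ 0) (hr : r ≠ 0) :
    cc A d r i j = -(((qvar ^ d j) ^ r) ^ 3 + (qvar ^ d j) ^ r) := by
  unfold cc
  rw [hA]
  have h2 : ((r : ℤ) * (-2)) = -((2 * r : ℕ) : ℤ) := by push_cast; ring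
  rw [h2, qint_neg, qint_two_mul _ (pow_ne_zero _ qvar_ne_zero) r, mul_neg, neg_div,
    mul_div_assoc, mul_div_cancel_left₀ _ (qint_ne (d j) r hdj hr)]
  have hti : ((qvar : Kq) ^ d i) ^ r = ((qvar ^ d j) ^ r) ^ 2 := by
    rw [hd2, mul_comm 2 (d j), pow_mul]
    exact pow_right_comm _ _ _
  rw [hti]
  have ht : ((qvar : Kq) ^ d j) ^ r ≠ 0 := pow_ne_zero _ (pow_ne_zero _ qvar_ne_zero)
  field_simp

lemma cc_m3 (i j : Fin n) (hA : A j i = -3) (hd3 : d i = 3 * d j) (hdj : d j ≠ 0) (hr : r ≠ 0) :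
    cc A d r i j = -(((qvar ^ d j) ^ r) ^ 5 + ((qvar ^ d j) ^ r) ^ 3 + (qvar ^ d j) ^ r) := by
  unfold cc
  rw [hA]
  have h2 : ((r : ℤ) * (-3)) = -((3 * r : ℕ) : ℤ) := by push_cast; ring
  rw [h2, qint_neg, qint_three_mul _ (pow_ne_zero _ qvar_ne_zero) r, mul_neg, neg_div,
    mul_div_assoc, mul_div_cancel_left₀ _ (qint_ne (d j) r hdj hr)]
  have hti : ((qvar : Kq) ^ d i) ^ r = ((qvar ^ d j) ^ r) ^ 3 := by
    rw [hd3, mul_comm 3 (d j), pow_mul]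
    exact pow_right_comm _ _ _
  rw [hti]
  have ht : ((qvar : Kq) ^ d j) ^ r ≠ 0 := pow_ne_zero _ (pow_ne_zero _ qvar_ne_zero)
  field_simp

/-- Vector agreeing with `v` off `{i,j}` and with values `x`, `y` at `i`, `j`. -/
noncomputable def ws {n : ℕ} (v : Fin n → Kq) (i j : Fin n) (x y : Kq) : Fin n → Kq :=
  fun k => if k = i then x else if k = j then y else v k

lemma ws_self {n : ℕ} (v : Fin n → Kq) (i j : Fin n) : ws v i j (v i) (v j) = v := by
  funext k
  unfold ws
  by_cases h1 : k = i
  · subst h1; simp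
  · by_cases h2 : k = j
    · subst h2; simp [h1]
    · simp [h1, h2]

lemma ws_congr {n : ℕ} (v : Fin n → Kq) (i j : Fin n) {x y x' y' : Kq}
    (hx : x = x') (hy : y = y') : ws v i j x y = ws v i j x' y' := by rw [hx, hy]

lemma sum_ws {n : ℕ} (c v : Fin n → Kq) (i j : Fin n) (hij : i ≠ j) (x y : Kq) :
    ∑ m, c m * ws v i j x y m
      = (∑ m, c m * v m) + c i * (x - v i) + c j * (y - v j) := by
  have key : ∀ m, c m * ws v i j x y m
      = c m * v m + ((if m = i then c i * (x - v i) else 0)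
        + (if m = j then c j * (y - v j) else 0)) := by
    intro m
    unfold ws
    by_cases h1 : m = i
    · subst h1
      simp [hij]
      ring
    · by_cases h2 : m = j
      · subst h2
        simp [h1]
        ring
      · simp [h1, h2]
  rw [Finset.sum_congr rfl (fun m _ => key m), Finset.sum_add_distrib, Finset.sum_add_distrib,
    Finset.sum_ite_eq' Finset.univ i (fun _ => c i * (x - v i)),
    Finset.sum_ite_eq' Finset.univ j (fun _ => c j * (y - v j))]
  simp only [Finset.mem_univ, if_pos]
  ring

lemma T0_eq_cc {n : ℕ} (A : Matrix (Fin n) (Fin n) ℤ) (d : Fin n → ℕ) (r : ℕ)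
    (l : Fin n) (v : Fin n → Kq) :
    T0 A d r l v = fun k => if k = l then v l - ∑ m, cc A d r l m * v m else v k := rfl

lemma T0_ws_left (i j : Fin n) (hij : i ≠ j) (v : Fin n → Kq) (x y : Kq) :
    T0 A d r i (ws v i j x y)
      = ws v i j (x - ((∑ m, cc A d r i m * v m)
          + cc A d r i i * (x - v i) + cc A d r i j * (y - v j))) y := by
  funext k
  rw [T0_eq_cc]
  by_cases hk : k = i
  · subst hk
    simp only [if_pos rfl]
    have hsum := sum_ws (cc A d r k) v k j hij x y
    rw [hsum]
    have : ws v k j x y k = x := by unfold ws; simp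
    rw [this]
    unfold ws
    simp
  · simp only [if_neg hk]
    unfold ws
    simp [hk]

lemma T0_ws_right (i j : Fin n) (hij : i ≠ j) (v : Fin n → Kq) (x y : Kq) :
    T0 A d r j (ws v i j x y)
      = ws v i j x (y - ((∑ m, cc A d r j m * v m)
          + cc A d r j i * (x - v i) + cc A d r j j * (y - v j))) := by
  funext k
  rw [T0_eq_cc]
  by_cases hk : k = j
  · subst hk
    simp only [if_pos rfl]
    have hsum := sum_ws (cc A d r k) v i k hij x y
    rw [hsum]
    have h1 : ws v i k x y k = y := by unfold ws; simp [Ne.symm hij]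
    rw [h1]
    unfold ws
    simp [Ne.symm hij]
  · simp only [if_neg hk]
    unfold ws
    by_cases h1 : k = i
    · simp [h1, hk]
    · simp [h1, hk]

lemma braid1 (i j : Fin n) (hij : i ≠ j) (hAii : A i i = 2) (hAjj : A j j = 2)
    (hAij : A i j = -1) (hAji : A j i = -1) (hde : d i = d j) (hdj : d j ≠ 0) (hr : r ≠ 0) :
    T0 A d r i ∘ T0 A d r j ∘ T0 A d r i = T0 A d r j ∘ T0 A d r i ∘ T0 A d r j := by
  have hdi : d i ≠ 0 := by rw [hde]; exact hdj
  have hcii := cc_diag A d r i hAii hdi hr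
  have hcjj := cc_diag A d r j hAjj hdj hr
  have hcij := cc_m1 A d r i j hAji hdj hr
  have hcji := cc_m1 A d r j i hAij hdi hr
  rw [hde] at hcii hcij
  funext v
  simp only [Function.comp_apply]
  have hv : v = ws v i j (v i) (v j) := (ws_self v i j).symm
  rw [hv]
  simp only [T0_ws_left A d r i j hij, T0_ws_right A d r i j hij]
  rw [hcii, hcjj, hcij, hcji]
  exact ws_congr v i j (by ring) (by ring)

lemma braid2 (i j : Fin n) (hij : i ≠ j) (hAii : A i i = 2) (hAjj : A j j = 2)
    (hAij : A i j = -1) (hAji : A j i = -2) (hd2 : d i = 2 * d j) (hdj : d j ≠ 0) (hr : r ≠ 0) :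
    (T0 A d r i ∘ T0 A d r j) ∘ (T0 A d r i ∘ T0 A d r j) =
      (T0 A d r j ∘ T0 A d r i) ∘ (T0 A d r j ∘ T0 A d r i) := by
  have hdi : d i ≠ 0 := by rw [hd2]; positivity
  have hcii := cc_diag A d r i hAii hdi hr
  have hcjj := cc_diag A d r j hAjj hdj hr
  have hcij := cc_m2 A d r i j hAji hd2 hdj hr
  have hcji := cc_m1 A d r j i hAij hdi hr
  have hpw : ((qvar : Kq) ^ d i) ^ r = ((qvar ^ d j) ^ r) ^ 2 := by
    rw [hd2, mul_comm 2 (d j), pow_mul]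
    exact pow_right_comm _ _ _
  rw [hpw] at hcii
  funext v
  simp only [Function.comp_apply]
  have hv : v = ws v i j (v i) (v j) := (ws_self v i j).symm
  rw [hv]
  simp only [T0_ws_left A d r i j hij, T0_ws_right A d r i j hij]
  rw [hcii, hcjj, hcij, hcji]
  exact ws_congr v i j (by ring) (by ring)

lemma braid3 (i j : Fin n) (hij : i ≠ j) (hAii : A i i = 2) (hAjj : A j j = 2)
    (hAij : A i j = -1) (hAji : A j i = -3) (hd3 : d i = 3 * d j) (hdj : d j ≠ 0) (hr : r ≠ 0) :
    (T0 A d r i ∘ T0 A d r j) ∘ (T0 A d r i ∘ T0 A d r j) ∘ (T0 A d r i ∘ T0 A d r j) =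
      (T0 A d r j ∘ T0 A d r i) ∘ (T0 A d r j ∘ T0 A d r i) ∘ (T0 A d r j ∘ T0 A d r i) := by
  have hdi : d i ≠ 0 := by rw [hd3]; positivity
  have hcii := cc_diag A d r i hAii hdi hr
  have hcjj := cc_diag A d r j hAjj hdj hr
  have hcij := cc_m3 A d r i j hAji hd3 hdj hr
  have hcji := cc_m1 A d r j i hAij hdi hr
  have hpw : ((qvar : Kq) ^ d i) ^ r = ((qvar ^ d j) ^ r) ^ 3 := by
    rw [hd3, mul_comm 3 (d j), pow_mul]
    exact pow_right_comm _ _ _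
  rw [hpw] at hcii
  funext v
  simp only [Function.comp_apply]
  have hv : v = ws v i j (v i) (v j) := (ws_self v i j).symm
  rw [hv]
  simp only [T0_ws_left A d r i j hij, T0_ws_right A d r i j hij]
  rw [hcii, hcjj, hcij, hcji]
  exact ws_congr v i j (by ring) (by ring)

theorem stmt_0 {n : ℕ} (A : Matrix (Fin n) (Fin n) ℤ) (d : Fin n → ℕ)
    (hdiag : ∀ i, A i i = 2) (hoff : ∀ i j, i ≠ j → A i j ≤ 0)
    (hd : ∀ i, 1 ≤ d i) (hsym : ∀ i j, (d i : ℤ) * A i j = (d j : ℤ) * A j i)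
    (r : ℕ) (hr : 1 ≤ r) (i j : Fin n) (hij : i ≠ j) :
    (A i j * A j i = 0 →
      T0 A d r i ∘ T0 A d r j = T0 A d r j ∘ T0 A d r i) ∧
    (A i j * A j i = 1 →
      T0 A d r i ∘ T0 A d r j ∘ T0 A d r i = T0 A d r j ∘ T0 A d r i ∘ T0 A d r j) ∧
    (A i j * A j i = 2 →
      (T0 A d r i ∘ T0 A d r j) ∘ (T0 A d r i ∘ T0 A d r j) =
        (T0 A d r j ∘ T0 A d r i) ∘ (T0 A d r j ∘ T0 A d r i)) ∧
    (A i j * A j i = 3 →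
      (T0 A d r i ∘ T0 A d r j) ∘ (T0 A d r i ∘ T0 A d r j) ∘ (T0 A d r i ∘ T0 A d r j) =
        (T0 A d r j ∘ T0 A d r i) ∘ (T0 A d r j ∘ T0 A d r i) ∘ (T0 A d r j ∘ T0 A d r i)) := by
  have hr' : r ≠ 0 := by omega
  have hdi : d i ≠ 0 := by have := hd i; omega
  have hdj : d j ≠ 0 := by have := hd j; omega
  have hdiZ : ((d i : ℤ)) ≠ 0 := by exact_mod_cast hdi
  have hdjZ : ((d j : ℤ)) ≠ 0 := by exact_mod_cast hdj
  refine ⟨fun h0 => ?_, fun h1 => ?_, fun h2 => ?_, fun h3 => ?_⟩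
  · -- case 0
    have hAij : A i j = 0 ∧ A j i = 0 := by
      rcases mul_eq_zero.mp h0 with h | h
      · refine ⟨h, ?_⟩
        have hs := hsym i j
        rw [h, mul_zero] at hs
        exact (mul_eq_zero.mp hs.symm).resolve_left hdjZ
      · refine ⟨?_, h⟩
        have hs := hsym i j
        rw [h, mul_zero] at hs
        exact (mul_eq_zero.mp hs).resolve_left hdiZ
    obtain ⟨hA1, hA2⟩ := hAij
    funext v
    simp only [Function.comp_apply]
    have hv : v = ws v i j (v i) (v j) := (ws_self v i j).symm
    rw [hv]
    simp only [T0_ws_left A d r i j hij, T0_ws_right A d r i j hij]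
    rw [cc_zero A d r i j hA2, cc_zero A d r j i hA1]
    exact ws_congr v i j (by ring) (by ring)
  · -- case 1
    have hA : A i j = -1 ∧ A j i = -1 := by
      rcases Int.mul_eq_one_iff_eq_one_or_neg_one.mp h1 with ⟨h, h'⟩ | ⟨h, h'⟩
      · have := hoff i j hij; omega
      · exact ⟨h, h'⟩
    obtain ⟨hAij, hAji⟩ := hA
    have hde : d i = d j := by
      have hs := hsym i j
      rw [hAij, hAji] at hs
      omega
    exact braid1 A d r i j hij (hdiag i) (hdiag j) hAij hAji hde hdj hr'
  · -- case 2
    have hcase : A i j = -1 ∧ A j i = -2 ∨ A i j = -2 ∧ A j i = -1 := by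
      have h1 := hoff i j hij
      have h1' := hoff j i (Ne.symm hij)
      have ha0 : A i j ≠ 0 := by intro h; rw [h, zero_mul] at h2; exact absurd h2 (by norm_num)
      have hdvd : (-(A i j)) ∣ 2 := ⟨-(A j i), by rw [neg_mul_neg]; omega⟩
      have hle := Int.le_of_dvd (by norm_num) hdvd
      have hor : A i j = -1 ∨ A i j = -2 := by omega
      rcases hor with h | h
      · left; refine ⟨h, ?_⟩; rw [h] at h2; omega
      · right; refine ⟨h, ?_⟩; rw [h] at h2; omega
    rcases hcase with ⟨hAij, hAji⟩ | ⟨hAij, hAji⟩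
    · have hd2 : d i = 2 * d j := by
        have hs := hsym i j
        rw [hAij, hAji] at hs
        omega
      exact braid2 A d r i j hij (hdiag i) (hdiag j) hAij hAji hd2 hdj hr'
    · have hd2 : d j = 2 * d i := by
        have hs := hsym i j
        rw [hAij, hAji] at hs
        omega
      exact (braid2 A d r j i (Ne.symm hij) (hdiag j) (hdiag i) hAji hAij hd2 hdi hr').symm
  · -- case 3
    have hcase : A i j = -1 ∧ A j i = -3 ∨ A i j = -3 ∧ A j i = -1 := by
      have h1 := hoff i j hij
      have h1' := hoff j i (Ne.symm hij)
      have ha0 : A i j ≠ 0 := by intro h; rw [h, zero_mul] at h3; exact absurd h3 (by norm_num)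
      have hdvd : (-(A i j)) ∣ 3 := ⟨-(A j i), by rw [neg_mul_neg]; omega⟩
      have hle := Int.le_of_dvd (by norm_num) hdvd
      have hor : A i j = -1 ∨ A i j = -2 ∨ A i j = -3 := by omega
      rcases hor with h | h | h
      · left; refine ⟨h, ?_⟩; rw [h] at h3; omega
      · exfalso; rw [h] at h3; omega
      · right; refine ⟨h, ?_⟩; rw [h] at h3; omega
    rcases hcase with ⟨hAij, hAji⟩ | ⟨hAij, hAji⟩
    · have hd3 : d i = 3 * d j := by
        have hs := hsym i j
        rw [hAij, hAji] at hs
        omega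
      exact braid3 A d r i j hij (hdiag i) (hdiag j) hAij hAji hd3 hdj hr'
    · have hd3 : d j = 3 * d i := by
        have hs := hsym i j
        rw [hAij, hAji] at hs
        omega
      exact (braid3 A d r j i (Ne.symm hij) (hdiag j) (hdiag i) hAji hAij hd3 hdi hr').symm
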